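/- Let n ≥ 3 be an integer, let l₀, …, lₙ be nonnegative integers, and let (y₁,…,yₙ) be an admissible tuple of real numbers. Then the following recursion holds: Φₙ(l₀,…,lₙ; y₁,…,yₙ) = [l_{n−1} = 0] · (yₙ^{lₙ}/yₙ) · Φ_{n−1}(l₀,…,l_{n−2},0; y₁,…,y_{n−1}) − [lₙ = 0] · ((−yₙ)^{l_{n−1}}/yₙ) · Φ_{n−1}(l₀,…,l_{n−2},0; y₁,…,y_{n−2}, y_{n−1}+yₙ) + ∑_{m=0}^{n−2} (−1)^m · (∏_{r=0}^{m−1} (−S(r+1,m))^{l_r}/S(r+1,m)) · [l_m = 0] · (∏_{r=m+1}^{n−2} S(m+1,r)^{l_r}/S(m+1,r)) · Φ₂(0, l_{n−1}, lₙ; S(m+1,n−1), yₙ). -/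

import Mathlib

/-- `S y a b = y_a + y_{a+1} + ⋯ + y_b`. -/
noncomputable def S (y : ℕ → ℝ) (a b : ℕ) : ℝ := ∑ t ∈ Finset.Icc a b, y t

/-- `(y₁, …, yₙ)` is admissible if `S(a,b) ≠ 0` for all `1 ≤ a ≤ b ≤ n`. -/
def Admissible (n : ℕ) (y : ℕ → ℝ) : Prop :=
  ∀ a b : ℕ, 1 ≤ a → a ≤ b → b ≤ n → S y a b ≠ 0

/-- `Φₙ(l₀,…,lₙ; y₁,…,yₙ)`, the pointwise ε→0 value of the distributional sum of
Lemma 1 of the paper. -/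
noncomputable def Phi (n : ℕ) (l : ℕ → ℕ) (y : ℕ → ℝ) : ℝ :=
  ∑ m ∈ Finset.range (n + 1),
    (-1 : ℝ) ^ m *
      (∏ r ∈ Finset.range m, (-S y (r + 1) m) ^ l r / S y (r + 1) m) *
      (if l m = 0 then 1 else 0) *
      (∏ r ∈ Finset.Icc (m + 1) n, (S y (m + 1) r) ^ l r / S y (m + 1) r)

lemma S_top (y : ℕ → ℝ) {a b c : ℕ} (h : a ≤ c) (hc : c = b + 1) :
    S y a c = S y a b + y c := by
  subst hc; exact Finset.sum_Icc_succ_top h y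

lemma prod_Icc_top (f : ℕ → ℝ) {a b c : ℕ} (h : a ≤ c) (hc : c = b + 1) :
    ∏ r ∈ Finset.Icc a c, f r = (∏ r ∈ Finset.Icc a b, f r) * f c := by
  subst hc; exact Finset.prod_Icc_succ_top h f

lemma sum_range_top (f : ℕ → ℝ) {b c : ℕ} (hc : c = b + 1) :
    ∑ m ∈ Finset.range c, f m = ∑ m ∈ Finset.range b, f m + f b := by
  subst hc; exact Finset.sum_range_succ f b

lemma prod_range_top (f : ℕ → ℝ) {b c : ℕ} (hc : c = b + 1) :
    ∏ m ∈ Finset.range c, f m = (∏ m ∈ Finset.range b, f m) * f b := by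
  subst hc; exact Finset.prod_range_succ f b

lemma S_single (y : ℕ → ℝ) (a : ℕ) : S y a a = y a := by simp [S]

lemma S_congr (y z : ℕ → ℝ) {a b : ℕ} (h : ∀ t, a ≤ t → t ≤ b → y t = z t) :
    S y a b = S z a b :=
  Finset.sum_congr rfl fun t ht => by
    rw [Finset.mem_Icc] at ht; exact h t ht.1 ht.2

lemma Phi2_eval (a b : ℝ) (p q : ℕ) :
    Phi 2 (fun r => if r = 1 then p else if r = 2 then q else 0)
      (fun t => if t = 1 then a else b)
    = a ^ p / a * ((a + b) ^ q / (a + b))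
      - (if p = 0 then (1:ℝ) else 0) * (1 / a) * (b ^ q / b)
      + (if q = 0 then (1:ℝ) else 0) * (1 / (a + b)) * ((-b) ^ p / b) := by
  have h11 : S (fun t => if t = 1 then a else b) 1 1 = a := by simp [S]
  have h22 : S (fun t => if t = 1 then a else b) 2 2 = b := by simp [S]
  have h12 : S (fun t => if t = 1 then a else b) 1 2 = a + b := by
    rw [S, show Finset.Icc 1 2 = {1, 2} by rfl]
    simp
  unfold Phi
  rw [show (2:ℕ) + 1 = 1 + 1 + 1 from rfl, Finset.sum_range_succ, Finset.sum_range_succ,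
    Finset.sum_range_succ]
  simp only [Nat.reduceAdd, Nat.zero_add, Finset.prod_range_zero, Finset.prod_range_one,
    Finset.prod_range_succ, show Finset.Icc 1 2 = {1, 2} by rfl,
    show Finset.Icc 2 2 = {2} by rfl, show Finset.Icc 3 2 = (∅ : Finset ℕ) by rfl,
    Finset.prod_empty, Finset.prod_singleton, Finset.sum_range_zero,
    Finset.prod_pair (show (1:ℕ) ≠ 2 by norm_num), reduceIte, h11, h22, h12]
  norm_num
  split_ifs <;> ring

/-- the recursion for `Φₙ`, `n ≥ 3`:
`Φₙ(l₀,…,lₙ; y₁,…,yₙ)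
  = [l_{n−1} = 0] (yₙ^{lₙ}/yₙ) Φ_{n−1}(l₀,…,l_{n−2},0; y₁,…,y_{n−1})
  − [lₙ = 0] ((−yₙ)^{l_{n−1}}/yₙ) Φ_{n−1}(l₀,…,l_{n−2},0; y₁,…,y_{n−2},y_{n−1}+yₙ)
  + ∑_{m=0}^{n−2} (−1)^m (∏_{r<m} (−S(r+1,m))^{l_r}/S(r+1,m)) [l_m = 0]
      (∏_{r=m+1}^{n−2} S(m+1,r)^{l_r}/S(m+1,r)) Φ₂(0,l_{n−1},lₙ; S(m+1,n−1), yₙ)`. -/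
theorem Phi_recursion (n : ℕ) (hn : 3 ≤ n) (l : ℕ → ℕ) (y : ℕ → ℝ)
    (hy : Admissible n y) :
    Phi n l y =
      (if l (n - 1) = 0 then 1 else 0) * (y n ^ l n / y n) *
          Phi (n - 1) (fun r => if r = n - 1 then 0 else l r) y
      - (if l n = 0 then 1 else 0) * ((-y n) ^ l (n - 1) / y n) *
          Phi (n - 1) (fun r => if r = n - 1 then 0 else l r)
            (fun t => if t = n - 1 then y (n - 1) + y n else y t)
      + ∑ m ∈ Finset.range (n - 1),
          (-1 : ℝ) ^ m *
            (∏ r ∈ Finset.range m, (-S y (r + 1) m) ^ l r / S y (r + 1) m) *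
            (if l m = 0 then 1 else 0) *
            (∏ r ∈ Finset.Icc (m + 1) (n - 2),
              (S y (m + 1) r) ^ l r / S y (m + 1) r) *
            Phi 2 (fun r => if r = 1 then l (n - 1) else if r = 2 then l n else 0)
              (fun t => if t = 1 then S y (m + 1) (n - 1) else y n) := by
  obtain ⟨k, rfl⟩ : ∃ k, n = k + 3 := ⟨n - 3, by omega⟩
  clear hn hy
  simp only [show k + 3 - 1 = k + 2 by omega, show k + 3 - 2 = k + 1 by omega]
  simp only [Phi2_eval]
  set z : ℕ → ℝ := fun t => if t = k + 2 then y (k + 2) + y (k + 3) else y t with hz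
  have hty : ∀ a b : ℕ, b ≤ k + 1 → S z a b = S y a b := by
    intro a b hb
    exact S_congr _ _ fun t h1 h2 => by rw [hz]; simp only []; rw [if_neg (by omega)]
  have htop : ∀ a : ℕ, a ≤ k + 2 → S z a (k + 2) = S y a (k + 2) + y (k + 3) := by
    intro a ha
    rw [S_top z ha (show k + 2 = (k + 1) + 1 by omega),
      S_top y ha (show k + 2 = (k + 1) + 1 by omega), hty a (k + 1) (by omega)]
    have : z (k + 2) = y (k + 2) + y (k + 3) := by simp [hz]
    rw [this]; ring
  simp only [Phi]
  conv_lhs => rw [Finset.sum_range_succ, Finset.sum_range_succ]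
  conv_rhs => lhs; lhs; rw [Finset.sum_range_succ]
  conv_rhs => lhs; rhs; rw [Finset.sum_range_succ]
  rw [mul_add, mul_add, Finset.mul_sum, Finset.mul_sum, add_sub_add_comm]
  conv_lhs => rw [add_assoc]
  conv_rhs => rw [add_right_comm, ← Finset.sum_sub_distrib, ← Finset.sum_add_distrib]
  congr 1
  · apply Finset.sum_congr rfl
    intro m hm
    rw [Finset.mem_range] at hm
    simp only [if_neg (show ¬ m = k + 2 by omega)]
    have e1 : (∏ x ∈ Finset.range m, ((-S y (x + 1) m) ^ if x = k + 2 then 0 else l x) / S y (x + 1) m)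
        = ∏ r ∈ Finset.range m, (-S y (r + 1) m) ^ l r / S y (r + 1) m :=
      Finset.prod_congr rfl fun x hx => by
        rw [Finset.mem_range] at hx; rw [if_neg (by omega)]
    have e2 : (∏ x ∈ Finset.range m, ((-S z (x + 1) m) ^ if x = k + 2 then 0 else l x) / S z (x + 1) m)
        = ∏ r ∈ Finset.range m, (-S y (r + 1) m) ^ l r / S y (r + 1) m :=
      Finset.prod_congr rfl fun x hx => by
        rw [Finset.mem_range] at hx
        rw [if_neg (by omega), hty (x + 1) m (by omega)]
    have e3 : (∏ x ∈ Finset.Icc (m + 1) (k + 2), (S y (m + 1) x ^ if x = k + 2 then 0 else l x) / S y (m + 1) x)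
        = (∏ x ∈ Finset.Icc (m + 1) (k + 1), S y (m + 1) x ^ l x / S y (m + 1) x) * (1 / S y (m + 1) (k + 2)) := by
      rw [prod_Icc_top _ (show m + 1 ≤ k + 2 by omega) (show k + 2 = (k + 1) + 1 by omega),
        if_pos rfl, pow_zero]
      exact congrArg (· * (1 / S y (m + 1) (k + 2)))
        (Finset.prod_congr rfl fun x hx => by
          rw [Finset.mem_Icc] at hx; rw [if_neg (by omega)])
    have e4 : (∏ x ∈ Finset.Icc (m + 1) (k + 2), (S z (m + 1) x ^ if x = k + 2 then 0 else l x) / S z (m + 1) x)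
        = (∏ x ∈ Finset.Icc (m + 1) (k + 1), S y (m + 1) x ^ l x / S y (m + 1) x)
            * (1 / (S y (m + 1) (k + 2) + y (k + 3))) := by
      rw [prod_Icc_top _ (show m + 1 ≤ k + 2 by omega) (show k + 2 = (k + 1) + 1 by omega),
        if_pos rfl, pow_zero, htop (m + 1) (by omega)]
      exact congrArg (· * (1 / (S y (m + 1) (k + 2) + y (k + 3))))
        (Finset.prod_congr rfl fun x hx => by
          rw [Finset.mem_Icc] at hx
          rw [if_neg (by omega), hty (m + 1) x (by omega)])
    have e5 : (∏ r ∈ Finset.Icc (m + 1) (k + 3), S y (m + 1) r ^ l r / S y (m + 1) r)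
        = (∏ x ∈ Finset.Icc (m + 1) (k + 1), S y (m + 1) x ^ l x / S y (m + 1) x)
            * (S y (m + 1) (k + 2) ^ l (k + 2) / S y (m + 1) (k + 2))
            * ((S y (m + 1) (k + 2) + y (k + 3)) ^ l (k + 3) / (S y (m + 1) (k + 2) + y (k + 3))) := by
      rw [prod_Icc_top _ (show m + 1 ≤ k + 3 by omega) (show k + 3 = (k + 2) + 1 by omega),
        prod_Icc_top _ (show m + 1 ≤ k + 2 by omega) (show k + 2 = (k + 1) + 1 by omega),
        S_top y (show m + 1 ≤ k + 3 by omega) (show k + 3 = (k + 2) + 1 by omega)]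
    rw [e1, e2, e3, e4, e5]
    ring
  · simp only [eq_self_iff_true, if_true]
    have g1 : (∏ r ∈ Finset.Icc (k + 2 + 1) (k + 3), S y (k + 2 + 1) r ^ l r / S y (k + 2 + 1) r)
        = y (k + 3) ^ l (k + 3) / y (k + 3) := by
      rw [show k + 2 + 1 = k + 3 by omega, Finset.Icc_self, Finset.prod_singleton, S_single]
    have g2 : Finset.Icc (k + 3 + 1) (k + 3) = ∅ := Finset.Icc_eq_empty (by omega)
    have g3 : Finset.Icc (k + 2 + 1) (k + 2) = ∅ := Finset.Icc_eq_empty (by omega)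
    have g4 : (∏ x ∈ Finset.range (k + 2), ((-S y (x + 1) (k + 2)) ^ if x = k + 2 then 0 else l x) / S y (x + 1) (k + 2))
        = ∏ x ∈ Finset.range (k + 2), (-S y (x + 1) (k + 2)) ^ l x / S y (x + 1) (k + 2) :=
      Finset.prod_congr rfl fun x hx => by
        rw [Finset.mem_range] at hx; rw [if_neg (by omega)]
    have g5 : (∏ r ∈ Finset.range (k + 3), (-S y (r + 1) (k + 3)) ^ l r / S y (r + 1) (k + 3))
        = (∏ x ∈ Finset.range (k + 2),
            (-(S y (x + 1) (k + 2) + y (k + 3))) ^ l x / (S y (x + 1) (k + 2) + y (k + 3)))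
          * ((-y (k + 3)) ^ l (k + 2) / y (k + 3)) := by
      rw [prod_range_top _ (show k + 3 = (k + 2) + 1 by omega)]
      rw [show k + 2 + 1 = k + 3 by omega, S_single]
      exact congrArg (· * ((-y (k + 3)) ^ l (k + 2) / y (k + 3)))
        (Finset.prod_congr rfl fun x hx => by
          rw [Finset.mem_range] at hx
          rw [S_top y (show x + 1 ≤ k + 3 by omega) (show k + 3 = (k + 2) + 1 by omega)])
    have g6 : (∏ x ∈ Finset.range (k + 2), ((-S z (x + 1) (k + 2)) ^ if x = k + 2 then 0 else l x) / S z (x + 1) (k + 2))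
        = ∏ x ∈ Finset.range (k + 2),
            (-(S y (x + 1) (k + 2) + y (k + 3))) ^ l x / (S y (x + 1) (k + 2) + y (k + 3)) :=
      Finset.prod_congr rfl fun x hx => by
        rw [Finset.mem_range] at hx
        rw [if_neg (by omega), htop (x + 1) (by omega)]
    rw [g1, g2, g3, g4, g5, g6, Finset.prod_empty,
      show (-1 : ℝ) ^ (k + 3) = -(-1 : ℝ) ^ (k + 2) by
        rw [show k + 3 = (k + 2) + 1 by omega, pow_succ]; ring]
    ring
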